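/- Suppose 2 < c < 4, n = ck, and k is sufficiently large (depending on c). Then ∑_{ℓ=0}^{k-2} C(n-k-1, ℓ) > C(n-k-1, k-1). -/

import Mathlib

theorem stmt5 (c : ℝ) (hc2 : 2 < c) (hc4 : c < 4) :
    ∃ k0 : ℕ, ∀ k n : ℕ, k0 ≤ k → (n : ℝ) = c * k →
      (n - k - 1).choose (k - 1) < ∑ ℓ ∈ Finset.range (k - 1), (n - k - 1).choose ℓ := by
  set ρ : ℝ := c / 2 with hρdef
  have hρ1 : 1 < ρ := by rw [hρdef]; linarith
  have hρ2 : ρ < 2 := by rw [hρdef]; linarith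
  have hρ0 : 0 < ρ := by linarith
  set s : ℝ := 1 / ρ with hsdef
  have hs0 : 0 < s := by positivity
  have hs1 : s < 1 := by rw [hsdef, div_lt_one hρ0]; exact hρ1
  clear_value ρ
  have hshalf : 1 / 2 < s := by
    rw [hsdef]
    rw [div_lt_div_iff₀ (by norm_num) hρ0]
    linarith
  clear_value s
  -- pick t with s^(t+2) < 2s - 1
  obtain ⟨t, ht⟩ := exists_pow_lt_of_lt_one (x := 2 * s - 1) (y := s) (by linarith) hs1
  have hst2 : s ^ (t + 2) < 2 * s - 1 := by
    calc s ^ (t + 2) ≤ s ^ t := pow_le_pow_of_le_one hs0.le hs1.le (by omega)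
    _ < 2 * s - 1 := ht
  -- the geometric sum exceeds 1
  have hS : 1 < ∑ j ∈ Finset.range (t + 1), s ^ (j + 1) := by
    have hne : s ≠ 1 := ne_of_lt hs1
    have hgeom : ∑ j ∈ Finset.range (t + 1), s ^ j = (s ^ (t + 1) - 1) / (s - 1) :=
      geom_sum_eq hne (t + 1)
    have hsum : ∑ j ∈ Finset.range (t + 1), s ^ (j + 1)
        = s * ∑ j ∈ Finset.range (t + 1), s ^ j := by
      rw [Finset.mul_sum]
      exact Finset.sum_congr rfl fun j _ => by ring
    rw [hsum, hgeom]
    rw [show s * ((s ^ (t + 1) - 1) / (s - 1)) = (s * (s ^ (t + 1) - 1)) / (s - 1) by ring]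
    rw [lt_div_iff_of_neg (by linarith)]
    have : s ^ (t + 2) = s * s ^ (t + 1) := by ring
    nlinarith [hst2]
  -- choose k0
  obtain ⟨k1, hk1⟩ := exists_nat_ge (((1 + (t : ℝ)) * (1 + ρ)) / ((4 - c) / 2))
  refine ⟨max (t + 3) k1, fun k n hk hn => ?_⟩
  have hkt : t + 3 ≤ k := le_trans (le_max_left _ _) hk
  have hkk1 : (k1 : ℝ) ≤ k := by exact_mod_cast le_trans (le_max_right _ _) hk
  have hkbig : (1 + (t : ℝ)) * (1 + ρ) ≤ ((4 - c) / 2) * k := by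
    rw [div_le_iff₀ (by linarith : (0:ℝ) < (4 - c) / 2)] at hk1
    nlinarith
  -- basic size facts
  have hkpos : 0 < k := by omega
  have hn2k : 2 * k + 1 ≤ n := by
    have hkr : (0 : ℝ) < (k : ℝ) := by exact_mod_cast hkpos
    have : ((2 * k : ℕ) : ℝ) < n := by push_cast; rw [hn]; nlinarith
    exact_mod_cast Nat.succ_le_of_lt (by exact_mod_cast this)
  set m : ℕ := n - k - 1 with hmdef
  clear_value m
  have hkm : k ≤ m := by omega
  have hmr : (m : ℝ) = c * k - k - 1 := by
    have h1 : ((m : ℕ) : ℝ) = (n : ℝ) - k - 1 := by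
      have : m + k + 1 = n := by omega
      have := congrArg (Nat.cast : ℕ → ℝ) this
      push_cast at this; linarith
    rw [h1, hn]
  -- one-step ratio bound
  have hstep : ∀ j : ℕ, j ≤ t → (m.choose (k - 1 - j) : ℝ) ≤ ρ * m.choose (k - 2 - j) := by
    intro j hj
    set ℓ : ℕ := k - 2 - j with hℓdef
    clear_value ℓ
    have hℓ1 : k - 1 - j = ℓ + 1 := by omega
    rw [hℓ1]
    have hid : (m.choose (ℓ + 1) : ℝ) * (ℓ + 1) = (m.choose ℓ : ℝ) * ((m - ℓ : ℕ) : ℝ) := by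
      exact_mod_cast congrArg (Nat.cast : ℕ → ℝ) (Nat.choose_succ_right_eq m ℓ)
    have hsubval : ((m - ℓ : ℕ) : ℝ) = c * k - 2 * k + 1 + j := by
      have h1 : (m - ℓ) + 2 * k = n + 1 + j := by omega
      have h2 := congrArg (Nat.cast : ℕ → ℝ) h1
      push_cast at h2
      rw [hn] at h2; linarith
    have hℓr : (ℓ : ℝ) = (k : ℝ) - 2 - j := by
      have h1 : ℓ + 2 + j = k := by omega
      have h2 := congrArg (Nat.cast : ℕ → ℝ) h1
      push_cast at h2; linarith
    have hjr : (j : ℝ) ≤ t := by exact_mod_cast hj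
    have hratio : ((m - ℓ : ℕ) : ℝ) ≤ ρ * ((ℓ : ℝ) + 1) := by
      have hkbig' := hkbig
      rw [hρdef] at hkbig'
      rw [hsubval, hℓr, hρdef]
      have hjc : (j : ℝ) * (c / 2) ≤ (t : ℝ) * (c / 2) :=
        mul_le_mul_of_nonneg_right hjr (by linarith)
      ring_nf at hkbig' ⊢
      linarith only [hkbig', hjr, hjc]
    have hpos : (0 : ℝ) < (ℓ : ℝ) + 1 := by positivity
    have hcnn : (0 : ℝ) ≤ (m.choose ℓ : ℝ) := Nat.cast_nonneg _
    rw [← mul_le_mul_iff_of_pos_right hpos]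
    calc (m.choose (ℓ + 1) : ℝ) * ((ℓ:ℝ) + 1) = (m.choose ℓ : ℝ) * ((m - ℓ : ℕ) : ℝ) := by
          exact_mod_cast hid
      _ ≤ (m.choose ℓ : ℝ) * (ρ * ((ℓ:ℝ) + 1)) := by
          exact mul_le_mul_of_nonneg_left hratio hcnn
      _ = ρ * (m.choose ℓ : ℝ) * ((ℓ:ℝ) + 1) := by ring
  -- chain
  have chain : ∀ j : ℕ, j ≤ t + 1 → (m.choose (k - 1) : ℝ) ≤ ρ ^ j * m.choose (k - 1 - j) := by
    intro j
    induction j with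
    | zero => intro _; simp
    | succ j ih =>
      intro hj
      have hj' : j ≤ t := by omega
      have h1 := ih (by omega)
      have h2 := hstep j hj'
      have hidx : k - 1 - (j + 1) = k - 2 - j := by omega
      rw [hidx]
      calc (m.choose (k - 1) : ℝ) ≤ ρ ^ j * m.choose (k - 1 - j) := h1
        _ ≤ ρ ^ j * (ρ * m.choose (k - 2 - j)) :=
            mul_le_mul_of_nonneg_left h2 (by positivity)
        _ = ρ ^ (j + 1) * m.choose (k - 2 - j) := by ring
  -- per-term lower bound
  have hterm : ∀ j ∈ Finset.range (t + 1),
      s ^ (j + 1) * (m.choose (k - 1) : ℝ) ≤ (m.choose (k - 2 - j) : ℝ) := by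
    intro j hj
    simp only [Finset.mem_range] at hj
    have h := chain (j + 1) (by omega)
    have hidx : k - 1 - (j + 1) = k - 2 - j := by omega
    rw [hidx] at h
    have hpow : (0 : ℝ) < ρ ^ (j + 1) := by positivity
    rw [hsdef, div_pow, one_pow, div_mul_eq_mul_div, div_le_iff₀ hpow]
    linarith [h]
  -- sum over subset
  have hsub : (∑ j ∈ Finset.range (t + 1), m.choose (k - 2 - j))
      ≤ ∑ ℓ ∈ Finset.range (k - 1), m.choose ℓ := by
    have hinj : ∀ a ∈ Finset.range (t + 1), ∀ b ∈ Finset.range (t + 1),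
        k - 2 - a = k - 2 - b → a = b := by
      intro a ha b hb hab
      simp only [Finset.mem_range] at ha hb
      omega
    have heq : ∑ j ∈ Finset.range (t + 1), m.choose (k - 2 - j)
        = ∑ ℓ ∈ (Finset.range (t + 1)).image (fun j => k - 2 - j), m.choose ℓ :=
      (Finset.sum_image hinj).symm
    rw [heq]
    apply Finset.sum_le_sum_of_subset
    intro x hx
    simp only [Finset.mem_image, Finset.mem_range] at hx ⊢
    obtain ⟨j, hj, rfl⟩ := hx
    omega
  -- positivity of the big term
  have hcpos : 0 < m.choose (k - 1) := Nat.choose_pos (by omega)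
  have hcposr : (0 : ℝ) < (m.choose (k - 1) : ℝ) := by exact_mod_cast hcpos
  -- finish
  have final : (m.choose (k - 1) : ℝ) < ∑ ℓ ∈ Finset.range (k - 1), (m.choose ℓ : ℝ) := by
    calc (m.choose (k - 1) : ℝ) = 1 * m.choose (k - 1) := by ring
      _ < (∑ j ∈ Finset.range (t + 1), s ^ (j + 1)) * m.choose (k - 1) := by
          exact mul_lt_mul_of_pos_right hS hcposr
      _ = ∑ j ∈ Finset.range (t + 1), s ^ (j + 1) * (m.choose (k - 1) : ℝ) := by
          rw [Finset.sum_mul]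
      _ ≤ ∑ j ∈ Finset.range (t + 1), (m.choose (k - 2 - j) : ℝ) :=
          Finset.sum_le_sum hterm
      _ ≤ ∑ ℓ ∈ Finset.range (k - 1), (m.choose ℓ : ℝ) := by
          exact_mod_cast hsub
  exact_mod_cast final
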